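/- The three distinct binary phylogenetic trees on the leaf set {a,b,c} cannot all be displayed by a single normal network on {a,b,c}. -/

import Mathlib

structure Net (X : Type) where
  V : Type
  fintypeV : Fintype V
  E : V → V → Prop
  root : V
  leaf : X → V
  leaf_inj : Function.Injective leaf
  acyclic : ∀ v : V, ¬ Relation.TransGen E v v
  no_in_root : ∀ u : V, ¬ E u root
  connected : ∀ v : V, Relation.ReflTransGen E root v

namespace Net

variable {X : Type} (N : Net X)

noncomputable instance : Fintype N.V := N.fintypeV

/-- The in-degree of a vertex. -/
noncomputable def indeg (v : N.V) : ℕ := {u : N.V | N.E u v}.ncard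

/-- The out-degree of a vertex. -/
noncomputable def outdeg (v : N.V) : ℕ := {u : N.V | N.E v u}.ncard

/-- A vertex is a leaf if it is labelled by an element of `X`. -/
def IsLeaf (v : N.V) : Prop := ∃ x : X, N.leaf x = v

/-- `N` is a (rooted) phylogenetic network on `X`: the root has out-degree two, the
leaves are exactly the out-degree-zero vertices and have in-degree one, and every
other vertex is a tree vertex (in-degree one, out-degree two) or a reticulation
(in-degree at least two, out-degree one). -/
def ValidNet : Prop :=
  N.outdeg N.root = 2 ∧
  (∀ x : X, N.indeg (N.leaf x) = 1 ∧ N.outdeg (N.leaf x) = 0) ∧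
  (∀ v : N.V, N.outdeg v = 0 → N.IsLeaf v) ∧
  (∀ v : N.V, v ≠ N.root → ¬ N.IsLeaf v →
    (N.indeg v = 1 ∧ N.outdeg v = 2) ∨ (2 ≤ N.indeg v ∧ N.outdeg v = 1))

/-- A reticulation is a vertex of in-degree at least two. -/
def IsReticulation (v : N.V) : Prop := 2 ≤ N.indeg v

/-- `N` is binary if every reticulation has in-degree exactly two. -/
def Binary : Prop := ∀ v : N.V, N.IsReticulation v → N.indeg v = 2

/-- `N` is tree-child: every non-leaf vertex has a child of in-degree at most one
(i.e. a child that is a tree vertex or a leaf). -/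
def TreeChild : Prop := ∀ v : N.V, ¬ N.IsLeaf v → ∃ c : N.V, N.E v c ∧ N.indeg c ≤ 1

/-- The reticulation edge `(u,v)` is a shortcut: there is a directed path from `u`
to `v` avoiding the edge `(u,v)`. -/
def Shortcut (u v : N.V) : Prop :=
  N.E u v ∧ 2 ≤ N.indeg v ∧ ∃ p : N.V, p ≠ u ∧ N.E p v ∧ Relation.ReflTransGen N.E u p

def HasNoShortcut : Prop := ∀ u v : N.V, ¬ N.Shortcut u v

/-- `N` is a normal network: a tree-child phylogenetic network with no shortcut. -/
def Normal : Prop := N.ValidNet ∧ N.TreeChild ∧ N.HasNoShortcut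

/-- `N` is a (rooted) binary phylogenetic `X`-tree: a phylogenetic network with
no reticulations. -/
def IsBinTree : Prop := N.ValidNet ∧ ∀ v : N.V, N.indeg v ≤ 1

/-- There is a tree path from `v` to the leaf labelled `x`: a directed path all of
whose vertices except possibly `v` are tree vertices or leaves. -/
def TreePathTo (v : N.V) (x : X) : Prop :=
  Relation.ReflTransGen (fun a b => N.E a b ∧ N.indeg b ≤ 1) v (N.leaf x)

/-- The hybridisation number `h(N) = ∑_{v ≠ root} (indeg v − 1)`. -/
noncomputable def hyb : ℕ := ∑ v : N.V, (N.indeg v - 1)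

/-- The number of reticulations of `N`. -/
noncomputable def numRetic : ℕ := {v : N.V | N.IsReticulation v}.ncard

/-- The number of shortcuts of `N`. -/
noncomputable def numShortcuts : ℕ := {q : N.V × N.V | N.Shortcut q.1 q.2}.ncard

/-- The length of the shortcut `(u,v)`: the number of vertices in the union of the
vertex sets of all directed paths from `u` to a parent of `v`. -/
noncomputable def scLen (u v : N.V) : ℕ :=
  {w : N.V | ∃ p : N.V, N.E p v ∧ Relation.ReflTransGen N.E u w ∧
    Relation.ReflTransGen N.E w p}.ncard

/-- `{a, b}` is a cherry: the leaves labelled `a` and `b` have a common parent. -/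
def Cherry (a b : X) : Prop :=
  a ≠ b ∧ ∃ p : N.V, N.E p (N.leaf a) ∧ N.E p (N.leaf b)

/-- `{a, b}` is a reticulated cherry with reticulation leaf `a`: the parent of `a`
is a reticulation and the parent of `b` is one of its parents. -/
def RetCherry (a b : X) : Prop :=
  a ≠ b ∧ ∃ pa pb : N.V, N.E pa (N.leaf a) ∧ N.E pb (N.leaf b) ∧
    N.IsReticulation pa ∧ N.E pb pa

/-- The cluster of a vertex: the set of leaf labels reachable from it. -/
def cluster (v : N.V) : Set X := {x : X | Relation.ReflTransGen N.E v (N.leaf x)}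

/-- Isomorphism of phylogenetic networks on `X`. -/
def Iso (M : Net X) : Prop :=
  ∃ e : N.V ≃ M.V, (∀ u v : N.V, N.E u v ↔ M.E (e u) (e v)) ∧
    ∀ x : X, e (N.leaf x) = M.leaf x

end Net

/-- An embedding of the tree `T` in the network `N`: an injective map on vertices
(respecting leaf labels) together with, for each edge of `T`, a directed path in `N`
between the images, such that internal vertices of these paths avoid the image of
the map and paths of distinct edges are internally disjoint. -/
structure Emb {X : Type} (N T : Net X) where
  φ : T.V → N.V
  inj : Function.Injective φ
  leafmap : ∀ x : X, φ (T.leaf x) = N.leaf x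
  paths : T.V → T.V → List N.V
  chain : ∀ u v : T.V, T.E u v → List.Chain' N.E (φ u :: paths u v ++ [φ v])
  internal : ∀ u v : T.V, T.E u v → ∀ w ∈ paths u v, w ∉ Set.range φ
  disjoint : ∀ u v u' v' : T.V, T.E u v → T.E u' v' → (u, v) ≠ (u', v') →
    ∀ w ∈ paths u v, w ∉ paths u' v'

/-- The vertex list of the path used for the tree edge `(u,v)`. -/
def Emb.pathList {X : Type} {N T : Net X} (e : Emb N T) (u v : T.V) : List N.V :=
  e.φ u :: e.paths u v ++ [e.φ v]

/-- The set of edges of `N` used by the embedding. -/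
def Emb.edges {X : Type} {N T : Net X} (e : Emb N T) : Set (N.V × N.V) :=
  {q : N.V × N.V | ∃ u v : T.V, T.E u v ∧
    q ∈ (e.pathList u v).zip (e.pathList u v).tail}

/-- `N` displays the tree `T`. -/
def Net.Displays {X : Type} (N T : Net X) : Prop := Nonempty (Emb N T)

/-- The set of clusters of a tree (or network). -/
def Net.clusterSet {X : Type} (T : Net X) : Set (Set X) :=
  {C : Set X | ∃ v : T.V, T.cluster v = C}

/-- The display set of `N` is, up to isomorphism, the set `P` of binary
phylogenetic `X`-trees. -/
def Net.DisplaySetIs {X : Type} (N : Net X) (P : Set (Net X)) : Prop :=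
  ∀ T : Net X, T.IsBinTree → (N.Displays T ↔ ∃ S ∈ P, T.Iso S)

/-- `P` is tightly normal compatible: it is the display set of a binary normal
network on `X`. -/
def TightlyNC {X : Type} (P : Set (Net X)) : Prop :=
  ∃ N : Net X, N.Normal ∧ N.Binary ∧ N.DisplaySetIs P

section Helpers

variable {α : Type} {r : α → α → Prop}

/-- Comparability of two co-ancestors under a unique-predecessor relation. -/
lemma rtg_comparable (hu : ∀ ⦃u u' v : α⦄, r u v → r u' v → u = u')
    {a v : α} (ha : Relation.ReflTransGen r a v) :
    ∀ {b : α}, Relation.ReflTransGen r b v →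
      Relation.ReflTransGen r a b ∨ Relation.ReflTransGen r b a := by
  induction ha with
  | refl => exact fun hb => Or.inr hb
  | @tail u v h1 h2 ih =>
      intro b hb
      rcases Relation.ReflTransGen.cases_tail hb with h | ⟨u', hbu', hu'v⟩
      · subst h; exact Or.inl (h1.tail h2)
      · cases hu h2 hu'v; exact ih hbu'

lemma chain_rtg : ∀ (l : List α) (a b : α), List.Chain r a (l ++ [b]) →
    Relation.ReflTransGen r a b := by
  intro l
  induction l with
  | nil => intro a b h; obtain ⟨hab, _⟩ := List.isChain_cons_cons.mp h; exact Relation.ReflTransGen.single hab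
  | cons x l ih =>
      intro a b h
      obtain ⟨hax, h⟩ := List.isChain_cons_cons.mp h
      exact Relation.ReflTransGen.head hax (ih x b h)

lemma chain_last : ∀ (l : List α) (a b : α), List.Chain r a (l ++ [b]) →
    (l = [] ∧ r a b) ∨ ∃ u ∈ l, r u b := by
  intro l
  induction l with
  | nil => intro a b h; obtain ⟨hab, _⟩ := List.isChain_cons_cons.mp h; exact Or.inl ⟨rfl, hab⟩
  | cons x l ih =>
      intro a b h
      obtain ⟨hax, h⟩ := List.isChain_cons_cons.mp h
      rcases ih x b h with ⟨rfl, hxb⟩ | ⟨u, hul, hub⟩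
      · exact Or.inr ⟨x, List.mem_cons_self, hxb⟩
      · exact Or.inr ⟨u, List.mem_cons_of_mem _ hul, hub⟩

end Helpers

namespace Net

variable {X : Type} {N : Net X}

lemma parents_finite (v : N.V) : {u : N.V | N.E u v}.Finite := Set.toFinite _

lemma indeg_root_eq : N.indeg N.root = 0 := by
  have : {u : N.V | N.E u N.root} = ∅ := by
    ext u; simp [N.no_in_root u]
  simp [indeg, this]

lemma parent_unique {u u' v : N.V} (hv : N.indeg v ≤ 1) (h : N.E u v) (h' : N.E u' v) :
    u = u' := by
  have := (Set.ncard_le_one (parents_finite v)).mp hv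
  exact this u h u' h'

lemma exists_parent {v : N.V} (hv : v ≠ N.root) : ∃ u, N.E u v := by
  have h := N.connected v
  rcases Relation.ReflTransGen.cases_tail h with h | ⟨u, _, huv⟩
  · exact absurd h.symm (fun hh => hv hh.symm)
  · exact ⟨u, huv⟩

lemma indeg_pos {v : N.V} (hv : v ≠ N.root) : 1 ≤ N.indeg v := by
  obtain ⟨u, hu⟩ := exists_parent hv
  have : ({u} : Set N.V) ⊆ {w | N.E w v} := by simp [hu]
  simpa [indeg] using Set.ncard_le_ncard this (parents_finite v)

lemma rtg_root {v : N.V} (h : Relation.ReflTransGen N.E v N.root) : v = N.root := by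
  rcases Relation.ReflTransGen.cases_tail h with h | ⟨u, _, huv⟩
  · exact h.symm
  · exact absurd huv (N.no_in_root u)

lemma ne_root_of_edge {u v : N.V} (h : N.E u v) : v ≠ N.root :=
  fun hv => N.no_in_root u (hv ▸ h)

lemma root_not_leaf (hval : N.ValidNet) : ¬ N.IsLeaf N.root := by
  rintro ⟨x, hx⟩
  have := (hval.2.1 x).1
  rw [hx, indeg_root_eq] at this
  exact absurd this (by norm_num)

lemma edge_of_outdeg_pos {v c : N.V} (h : N.E v c) : N.outdeg v ≠ 0 := by
  intro h0
  have : {u : N.V | N.E v u} = ∅ := (Set.ncard_eq_zero (Set.toFinite _)).mp h0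
  exact absurd (by exact h : c ∈ {u : N.V | N.E v u}) (by simp [this])

lemma leaf_no_out (hval : N.ValidNet) {x : X} {c : N.V} (h : N.E (N.leaf x) c) : False :=
  edge_of_outdeg_pos h (hval.2.1 x).2

lemma rtg_from_leaf (hval : N.ValidNet) {x : X} {v : N.V}
    (h : Relation.ReflTransGen N.E (N.leaf x) v) : v = N.leaf x := by
  rcases Relation.ReflTransGen.cases_head h with h | ⟨c, hc, _⟩
  · exact h.symm
  · exact absurd hc (fun hc => leaf_no_out hval hc)

lemma wf_up : WellFounded (fun a b : N.V => Relation.TransGen N.E a b) := by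
  have : Finite N.V := Finite.of_fintype N.V
  letI : IsTrans N.V (fun a b : N.V => Relation.TransGen N.E a b) :=
    ⟨fun _ _ _ h1 h2 => h1.trans h2⟩
  letI : IsIrrefl N.V (fun a b : N.V => Relation.TransGen N.E a b) := ⟨N.acyclic⟩
  exact Finite.wellFounded_of_trans_of_irrefl _

lemma wf_down : WellFounded (fun a b : N.V => Relation.TransGen N.E b a) := by
  have : Finite N.V := Finite.of_fintype N.V
  letI : IsTrans N.V (fun a b : N.V => Relation.TransGen N.E b a) :=
    ⟨fun _ _ _ h1 h2 => h2.trans h1⟩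
  letI : IsIrrefl N.V (fun a b : N.V => Relation.TransGen N.E b a) := ⟨N.acyclic⟩
  exact Finite.wellFounded_of_trans_of_irrefl _

/-- There is a non-leaf vertex all of whose children are leaves. -/
lemma exists_lowest_nonleaf (hval : N.ValidNet) :
    ∃ m : N.V, ¬ N.IsLeaf m ∧ ∀ c, N.E m c → N.IsLeaf c := by
  obtain ⟨m, hm, hmin⟩ := WellFounded.has_min wf_down {v : N.V | ¬ N.IsLeaf v}
    ⟨N.root, root_not_leaf hval⟩
  refine ⟨m, hm, fun c hc => ?_⟩
  by_contra hcl
  exact hmin c hcl (Relation.TransGen.single hc)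

/-- Every vertex reaches a leaf. -/
lemma reach_leaf (hval : N.ValidNet) (v : N.V) :
    ∃ x : X, Relation.ReflTransGen N.E v (N.leaf x) := by
  induction v using WellFounded.induction wf_down with
  | _ v ih =>
    by_cases hl : N.IsLeaf v
    · obtain ⟨x, hx⟩ := hl; exact ⟨x, hx ▸ Relation.ReflTransGen.refl⟩
    · have hod : N.outdeg v ≠ 0 := fun h0 => hl (hval.2.2.1 v h0)
      have : {u : N.V | N.E v u}.Nonempty := by
        rw [Set.nonempty_iff_ne_empty]
        intro he; exact hod (by simp [outdeg, he])
      obtain ⟨c, hc⟩ := this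
      obtain ⟨x, hx⟩ := ih c (Relation.TransGen.single hc)
      exact ⟨x, Relation.ReflTransGen.head hc hx⟩

lemma outdeg_two_children {v : N.V} (h : N.outdeg v = 2) :
    ∃ c1 c2, c1 ≠ c2 ∧ N.E v c1 ∧ N.E v c2 ∧ ∀ c, N.E v c → c = c1 ∨ c = c2 := by
  obtain ⟨c1, c2, hne, hs⟩ := Set.ncard_eq_two.mp (h : {u : N.V | N.E v u}.ncard = 2)
  refine ⟨c1, c2, hne, ?_, ?_, fun c hc => ?_⟩
  · have : c1 ∈ {u : N.V | N.E v u} := by rw [hs]; simp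
    exact this
  · have : c2 ∈ {u : N.V | N.E v u} := by rw [hs]; simp
    exact this
  · have : c ∈ ({c1, c2} : Set N.V) := hs ▸ hc
    simpa using this

lemma outdeg_one_child {v c c' : N.V} (h : N.outdeg v = 1) (hc : N.E v c) (hc' : N.E v c') :
    c = c' := by
  have := (Set.ncard_le_one (Set.toFinite _)).mp (le_of_eq (h : {u : N.V | N.E v u}.ncard = 1))
  exact this c hc c' hc'

lemma two_parents {v : N.V} (h : 2 ≤ N.indeg v) :
    ∃ u1 u2, u1 ≠ u2 ∧ N.E u1 v ∧ N.E u2 v := by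
  have := (Set.one_lt_ncard (parents_finite v)).mp (lt_of_lt_of_le one_lt_two h)
  obtain ⟨a, ha, b, hb, hab⟩ := this
  exact ⟨a, b, hab, ha, hb⟩

lemma indeg_two_of_parents {u1 u2 v : N.V} (h1 : N.E u1 v) (h2 : N.E u2 v) (hne : u1 ≠ u2) :
    2 ≤ N.indeg v := by
  exact (Set.one_lt_ncard (parents_finite v)).mpr ⟨u1, h1, u2, h2, hne⟩

end Net
open Relation in
/-- Full structural description of a binary phylogenetic tree on three leaves. -/
def TreeStruct (T : Net (Fin 3)) (x y z : Fin 3) (p : T.V) : Prop :=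
  x ≠ y ∧ x ≠ z ∧ y ≠ z ∧ p ≠ T.root ∧ (∀ w, T.leaf w ≠ p) ∧ (∀ w, T.leaf w ≠ T.root) ∧
  (∀ u v, T.E u v ↔ (u = T.root ∧ (v = p ∨ v = T.leaf z)) ∨
    (u = p ∧ (v = T.leaf x ∨ v = T.leaf y))) ∧
  (∀ v, v = T.root ∨ v = p ∨ v = T.leaf x ∨ v = T.leaf y ∨ v = T.leaf z)

lemma fin3_cover : ∀ (x y z w : Fin 3), x ≠ y → x ≠ z → y ≠ z → (w = x ∨ w = y ∨ w = z) := by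
  decide

lemma fin3_third : ∀ (x y : Fin 3), x ≠ y → ∃ z, z ≠ x ∧ z ≠ y := by decide

lemma treeStruct_swap {T : Net (Fin 3)} {x y z : Fin 3} {p : T.V}
    (h : TreeStruct T x y z p) : TreeStruct T y x z p := by
  obtain ⟨h1, h2, h3, h4, h5, h6, h7, h8⟩ := h
  refine ⟨h1.symm, h3, h2, h4, h5, h6, fun u v => ?_, fun v => ?_⟩
  · rw [h7 u v]; tauto
  · rcases h8 v with h|h|h|h|h <;> tauto

open Relation in
lemma exists_treeStruct {T : Net (Fin 3)} (hT : T.IsBinTree) :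
    ∃ x y z p, TreeStruct T x y z p := by
  obtain ⟨hval, hin⟩ := hT
  have hu : ∀ ⦃u u' v : T.V⦄, T.E u v → T.E u' v → u = u' :=
    fun u u' v h h' => Net.parent_unique (hin v) h h'
  -- the lowest non-leaf vertex and its children
  obtain ⟨m, hm, hmc⟩ := Net.exists_lowest_nonleaf hval
  have hmout : T.outdeg m = 2 := by
    by_cases hr : m = T.root
    · rw [hr]; exact hval.1
    · rcases hval.2.2.2 m hr hm with h | h
      · exact h.2
      · exact absurd h.1 (by have := hin m; omega)
  obtain ⟨c1, c2, hc12, hec1, hec2, hcc⟩ := Net.outdeg_two_children hmout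
  obtain ⟨x0, hx0⟩ := hmc c1 hec1
  obtain ⟨y0, hy0⟩ := hmc c2 hec2
  subst hx0; subst hy0
  have hxy : x0 ≠ y0 := fun h => hc12 (by rw [h])
  obtain ⟨z0, hzx, hzy⟩ := fin3_third x0 y0 hxy
  set p := m with hp
  set lx := T.leaf x0
  set ly := T.leaf y0
  set lz := T.leaf z0
  -- p is not the root
  have hproot : p ≠ T.root := by
    intro hr
    have hczr := T.connected lz
    rcases ReflTransGen.cases_head hczr with h | ⟨d, hd, hdz⟩
    · exact Net.root_not_leaf hval ⟨z0, h.symm⟩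
    · rcases hcc d (hr ▸ hd) with rfl | rfl
      · exact hzx (T.leaf_inj (Net.rtg_from_leaf hval hdz))
      · exact hzy (T.leaf_inj (Net.rtg_from_leaf hval hdz))
  have hlp : ∀ w, T.leaf w ≠ p := fun w hw => Net.leaf_no_out hval (hw ▸ hec1)
  -- parents of the cherry leaves
  have K1 : ∀ u, T.E u lx → u = p := fun u h => hu h hec1
  have K2 : ∀ u, T.E u ly → u = p := fun u h => hu h hec2
  -- classification of reachability
  have K4 : ∀ t : Fin 3, ∀ v, ReflTransGen T.E v (T.leaf t) →
      (∀ u, T.E u (T.leaf t) → u = p) → v = T.leaf t ∨ ReflTransGen T.E v p := by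
    intro t v hv hpar
    rcases ReflTransGen.cases_tail hv with h | ⟨u, hvu, hut⟩
    · exact Or.inl h.symm
    · exact Or.inr (by rw [← hpar u hut]; exact hvu)
  have K5 : ∀ v : T.V, v = lx ∨ v = ly ∨ ReflTransGen T.E v p ∨ ReflTransGen T.E v lz := by
    intro v
    obtain ⟨w, hw⟩ := Net.reach_leaf hval v
    rcases fin3_cover x0 y0 z0 w hxy (Ne.symm hzx) (Ne.symm hzy) with h0 | h0 | h0 <;> rw [h0] at hw
    · rcases K4 x0 v hw K1 with h | h
      · exact Or.inl h
      · exact Or.inr (Or.inr (Or.inl h))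
    · rcases K4 y0 v hw K2 with h | h
      · exact Or.inr (Or.inl h)
      · exact Or.inr (Or.inr (Or.inl h))
    · exact Or.inr (Or.inr (Or.inr hw))
  -- two children of a common parent cannot both reach the same vertex
  have noboth : ∀ (par d1 d2 t : T.V), d1 ≠ d2 → T.E par d1 → T.E par d2 →
      ReflTransGen T.E d1 t → ReflTransGen T.E d2 t → False := by
    intro par d1 d2 t hne h1 h2 r1 r2
    have key : ∀ (a b : T.V), a ≠ b → T.E par a → T.E par b →
        ReflTransGen T.E a b → False := by
      intro a b hab ha hb hr
      rcases ReflTransGen.cases_tail hr with h | ⟨u, hau, hub⟩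
      · exact hab h.symm
      · rw [hu hub hb] at hau
        exact T.acyclic par (TransGen.head' ha hau)
    rcases rtg_comparable hu r1 r2 with h | h
    · exact key d1 d2 hne h1 h2 h
    · exact key d2 d1 (Ne.symm hne) h2 h1 h
  -- the two children of the root
  have hrout := hval.1
  obtain ⟨r1, r2, hr12, her1, her2, hrc⟩ := Net.outdeg_two_children hrout
  have childclass : ∀ c, T.E T.root c → ReflTransGen T.E c p ∨ ReflTransGen T.E c lz := by
    intro c hc
    rcases K5 c with rfl | rfl | h | h
    · exact absurd (K1 T.root hc) (Ne.symm hproot)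
    · exact absurd (K2 T.root hc) (Ne.symm hproot)
    · exact Or.inl h
    · exact Or.inr h
  have hsplit : ∃ ca cb, ca ≠ cb ∧ T.E T.root ca ∧ T.E T.root cb ∧
      ReflTransGen T.E ca p ∧ ReflTransGen T.E cb lz := by
    rcases childclass r1 her1 with h1 | h1 <;> rcases childclass r2 her2 with h2 | h2
    · exact absurd (noboth T.root r1 r2 p hr12 her1 her2 h1 h2) not_false
    · exact ⟨r1, r2, hr12, her1, her2, h1, h2⟩
    · exact ⟨r2, r1, Ne.symm hr12, her2, her1, h2, h1⟩
    · exact absurd (noboth T.root r1 r2 lz hr12 her1 her2 h1 h2) not_false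
  obtain ⟨ca, cb, hcab, heca, hecb, hcap, hcbz⟩ := hsplit
  -- ca = p
  have hcap' : ca = p := by
    by_contra hne
    have hcanl : ¬ T.IsLeaf ca := by
      rintro ⟨w, hw⟩
      subst hw
      exact hne (Net.rtg_from_leaf hval hcap).symm
    have hcar : ca ≠ T.root := fun h => T.acyclic T.root (TransGen.single (h ▸ heca))
    have hcaout : T.outdeg ca = 2 := by
      rcases hval.2.2.2 ca hcar hcanl with h | h
      · exact h.2
      · exact absurd h.1 (by have := hin ca; omega)
    obtain ⟨d1, d2, hd12, hed1, hed2, _⟩ := Net.outdeg_two_children hcaout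
    have dclass : ∀ d, T.E ca d → ReflTransGen T.E d p ∨ ReflTransGen T.E d lz := by
      intro d hd
      rcases K5 d with rfl | rfl | h | h
      · exact absurd (K1 ca hd) hne
      · exact absurd (K2 ca hd) hne
      · exact Or.inl h
      · exact Or.inr h
    have hdex : ∃ d, T.E ca d ∧ ReflTransGen T.E d lz := by
      rcases dclass d1 hed1 with h1 | h1 <;> rcases dclass d2 hed2 with h2 | h2
      · exact absurd (noboth ca d1 d2 p hd12 hed1 hed2 h1 h2) not_false
      · exact ⟨d2, hed2, h2⟩
      · exact ⟨d1, hed1, h1⟩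
      · exact ⟨d1, hed1, h1⟩
    obtain ⟨d, hed, hdz⟩ := hdex
    -- compare d and cb, both reach lz
    rcases rtg_comparable hu hdz hcbz with h | h
    · rcases ReflTransGen.cases_tail h with h' | ⟨u, hdu, hucb⟩
      · subst h'
        exact hcar (hu hed hecb ▸ rfl)
      · rw [hu hucb hecb] at hdu
        have : d = T.root := Net.rtg_root hdu
        exact T.no_in_root ca (this ▸ hed)
    · rcases ReflTransGen.cases_tail h with h' | ⟨u, hcbu, hud⟩
      · subst h'
        exact hcar (hu hed hecb ▸ rfl)
      · rw [hu hud hed] at hcbu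
        rcases ReflTransGen.cases_tail hcbu with h'' | ⟨u', hcbu', hu'ca⟩
        · exact hcab h''
        · rw [hu hu'ca heca] at hcbu'
          have : cb = T.root := Net.rtg_root hcbu'
          exact T.acyclic T.root (TransGen.single (this ▸ hecb))
  subst hcap'
  -- cb = lz
  have hcbz' : cb = lz := by
    by_contra hne
    have hcbnl : ¬ T.IsLeaf cb := by
      rintro ⟨w, hw⟩
      subst hw
      exact hne (Net.rtg_from_leaf hval hcbz).symm
    have hcbr : cb ≠ T.root := fun h => T.acyclic T.root (TransGen.single (h ▸ hecb))
    have hcbout : T.outdeg cb = 2 := by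
      rcases hval.2.2.2 cb hcbr hcbnl with h | h
      · exact h.2
      · exact absurd h.1 (by have := hin cb; omega)
    obtain ⟨e1, e2, he12, hee1, hee2, _⟩ := Net.outdeg_two_children hcbout
    have eclass : ∀ e, T.E cb e → ReflTransGen T.E e lz := by
      intro e he
      have hnp : ¬ ReflTransGen T.E e ca := by
        intro hr
        rcases ReflTransGen.cases_tail hr with h' | ⟨u, heu, huca⟩
        · subst h'; exact hcbr (hu he heca ▸ rfl)
        · rw [hu huca heca] at heu
          have : e = T.root := Net.rtg_root heu
          exact T.no_in_root cb (this ▸ he)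
      rcases K5 e with rfl | rfl | h | h
      · exact absurd (K1 cb he) (fun hh => hcab (hh ▸ rfl))
      · exact absurd (K2 cb he) (fun hh => hcab (hh ▸ rfl))
      · exact absurd h hnp
      · exact h
    exact noboth cb e1 e2 lz he12 hee1 hee2 (eclass e1 hee1) (eclass e2 hee2)
  subst hcbz'
  -- now assemble
  have hrc' : ∀ c, T.E T.root c → c = p ∨ c = lz := by
    intro c hc
    have hp2 : p = r1 ∨ p = r2 := hrc p heca
    have hz2 : lz = r1 ∨ lz = r2 := hrc lz hecb
    have hplz : lz ≠ p := hlp z0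
    rcases hrc c hc with rfl | rfl
    · rcases hp2 with hp2 | hp2
      · exact Or.inl hp2.symm
      · rcases hz2 with hz2 | hz2
        · exact Or.inr hz2.symm
        · exact absurd (hp2.trans hz2.symm) (Ne.symm hplz)
    · rcases hp2 with hp2 | hp2
      · rcases hz2 with hz2 | hz2
        · exact absurd (hp2.trans hz2.symm) (fun hh => hplz hh.symm)
        · exact Or.inr hz2.symm
      · exact Or.inl hp2.symm
  have hpc' : ∀ c, T.E p c → c = lx ∨ c = ly := hcc
  have hlr : ∀ w, T.leaf w ≠ T.root := fun w hw => Net.root_not_leaf hval ⟨w, hw⟩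
  have cover : ∀ v : T.V, v = T.root ∨ v = p ∨ v = lx ∨ v = ly ∨ v = lz := by
    intro v
    have hconn := T.connected v
    induction hconn with
    | refl => exact Or.inl rfl
    | @tail u v hru hedge ih =>
        rcases ih with rfl | rfl | rfl | rfl | rfl
        · rcases hrc' v hedge with rfl | rfl
          · exact Or.inr (Or.inl rfl)
          · exact Or.inr (Or.inr (Or.inr (Or.inr rfl)))
        · rcases hpc' v hedge with rfl | rfl
          · exact Or.inr (Or.inr (Or.inl rfl))
          · exact Or.inr (Or.inr (Or.inr (Or.inl rfl)))
        · exact absurd hedge (fun h => Net.leaf_no_out hval h)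
        · exact absurd hedge (fun h => Net.leaf_no_out hval h)
        · exact absurd hedge (fun h => Net.leaf_no_out hval h)
  refine ⟨x0, y0, z0, p, hxy, Ne.symm hzx, Ne.symm hzy, hproot, hlp, hlr, ?_, cover⟩
  intro u v
  constructor
  · intro he
    rcases cover u with rfl | rfl | rfl | rfl | rfl
    · exact Or.inl ⟨rfl, hrc' v he⟩
    · exact Or.inr ⟨rfl, hpc' v he⟩
    · exact absurd he (fun h => Net.leaf_no_out hval h)
    · exact absurd he (fun h => Net.leaf_no_out hval h)
    · exact absurd he (fun h => Net.leaf_no_out hval h)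
  · rintro (⟨rfl, rfl | rfl⟩ | ⟨rfl, rfl | rfl⟩)
    · exact heca
    · exact hecb
    · exact hec1
    · exact hec2
lemma iso_of_treeStruct {T T' : Net (Fin 3)} {x y z : Fin 3} {p : T.V} {p' : T'.V}
    (h : TreeStruct T x y z p) (h' : TreeStruct T' x y z p') : T.Iso T' := by
  classical
  obtain ⟨hxy, hxz, hyz, hpr, hlp, hlr, hTE, hcov⟩ := h
  obtain ⟨_, _, _, hpr', hlp', hlr', hTE', hcov'⟩ := h'
  set f : T.V → T'.V := fun v =>
    if v = T.root then T'.root else if v = p then p' else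
    if v = T.leaf x then T'.leaf x else if v = T.leaf y then T'.leaf y else T'.leaf z
    with hf
  set g : T'.V → T.V := fun v =>
    if v = T'.root then T.root else if v = p' then p else
    if v = T'.leaf x then T.leaf x else if v = T'.leaf y then T.leaf y else T.leaf z
    with hg
  have hyx : T.leaf y ≠ T.leaf x := fun hh => hxy (T.leaf_inj hh).symm
  have hzx2 : T.leaf z ≠ T.leaf x := fun hh => hxz (T.leaf_inj hh).symm
  have hzy2 : T.leaf z ≠ T.leaf y := fun hh => hyz (T.leaf_inj hh).symm
  have hyx' : T'.leaf y ≠ T'.leaf x := fun hh => hxy (T'.leaf_inj hh).symm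
  have hzx2' : T'.leaf z ≠ T'.leaf x := fun hh => hxz (T'.leaf_inj hh).symm
  have hzy2' : T'.leaf z ≠ T'.leaf y := fun hh => hyz (T'.leaf_inj hh).symm
  have fr : f T.root = T'.root := by simp [hf]
  have fp : f p = p' := by simp [hf, hpr]
  have fx : f (T.leaf x) = T'.leaf x := by simp [hf, hlr x, hlp x]
  have fy : f (T.leaf y) = T'.leaf y := by
    simp [hf, hlr y, hlp y, hyx]
  have fz : f (T.leaf z) = T'.leaf z := by
    simp [hf, hlr z, hlp z, hzx2, hzy2]
  have gr : g T'.root = T.root := by simp [hg]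
  have gp : g p' = p := by simp [hg, hpr']
  have gx : g (T'.leaf x) = T.leaf x := by simp [hg, hlr' x, hlp' x]
  have gy : g (T'.leaf y) = T.leaf y := by
    simp [hg, hlr' y, hlp' y, hyx']
  have gz : g (T'.leaf z) = T.leaf z := by
    simp [hg, hlr' z, hlp' z, hzx2', hzy2']
  have hgf : Function.LeftInverse g f := by
    intro v
    rcases hcov v with rfl | rfl | rfl | rfl | rfl
    · rw [fr, gr]
    · rw [fp, gp]
    · rw [fx, gx]
    · rw [fy, gy]
    · rw [fz, gz]
  have hfg : Function.RightInverse g f := by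
    intro v
    rcases hcov' v with rfl | rfl | rfl | rfl | rfl
    · rw [gr, fr]
    · rw [gp, fp]
    · rw [gx, fx]
    · rw [gy, fy]
    · rw [gz, fz]
  refine ⟨⟨f, g, hgf, hfg⟩, fun u v => ?_, fun w => ?_⟩
  · show T.E u v ↔ T'.E (f u) (f v)
    rw [hTE u v, hTE' (f u) (f v)]
    have fi : Function.Injective f := hgf.injective
    constructor
    · rintro (⟨rfl, rfl | rfl⟩ | ⟨rfl, rfl | rfl⟩)
      · rw [fr, fp]; tauto
      · rw [fr, fz]; tauto
      · rw [fp, fx]; tauto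
      · rw [fp, fy]; tauto
    · rintro (⟨hu, hv⟩ | ⟨hu, hv⟩)
      · have hu' : u = T.root := by
          apply fi; rw [fr, hu]
        rcases hv with hv | hv
        · have : v = p := by apply fi; rw [fp, hv]
          tauto
        · have : v = T.leaf z := by apply fi; rw [fz, hv]
          tauto
      · have hu' : u = p := by apply fi; rw [fp, hu]
        rcases hv with hv | hv
        · have : v = T.leaf x := by apply fi; rw [fx, hv]
          tauto
        · have : v = T.leaf y := by apply fi; rw [fy, hv]
          tauto
  · show f (T.leaf w) = T'.leaf w
    rcases fin3_cover x y z w hxy hxz hyz with rfl | rfl | rfl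
    · exact fx
    · exact fy
    · exact fz

lemma treeStruct_cherry_unique {T : Net (Fin 3)} {x y z : Fin 3} {p : T.V}
    (h : TreeStruct T x y z p) {q : T.V} {α β : Fin 3} (hab : α ≠ β)
    (ha : T.E q (T.leaf α)) (hb : T.E q (T.leaf β)) :
    (α = x ∧ β = y) ∨ (α = y ∧ β = x) := by
  obtain ⟨hxy, hxz, hyz, hpr, hlp, hlr, hTE, hcov⟩ := h
  have hmem : ∀ γ : Fin 3, T.E q (T.leaf γ) → (q = T.root ∧ γ = z) ∨ (q = p ∧ (γ = x ∨ γ = y)) := by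
    intro γ hγ
    rcases (hTE q (T.leaf γ)).mp hγ with ⟨hq, hv | hv⟩ | ⟨hq, hv | hv⟩
    · exact absurd hv (hlp γ)
    · exact Or.inl ⟨hq, T.leaf_inj hv⟩
    · exact Or.inr ⟨hq, Or.inl (T.leaf_inj hv)⟩
    · exact Or.inr ⟨hq, Or.inr (T.leaf_inj hv)⟩
  rcases hmem α ha with ⟨hq1, rfl⟩ | ⟨hq1, hα⟩
  · rcases hmem β hb with ⟨_, rfl⟩ | ⟨hq2, _⟩
    · exact absurd rfl hab
    · exact absurd (hq1.symm.trans hq2) (Ne.symm hpr)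
  · rcases hmem β hb with ⟨hq2, rfl⟩ | ⟨_, hβ⟩
    · exact absurd (hq2.symm.trans hq1) (Ne.symm hpr)
    · rcases hα with rfl | rfl <;> rcases hβ with rfl | rfl
      · exact absurd rfl hab
      · tauto
      · tauto
      · exact absurd rfl hab
open Relation

namespace Net

variable {X : Type} {N : Net X}

lemma outdeg_one_child' {v : N.V} (h : N.outdeg v = 1) :
    ∃ c, N.E v c ∧ ∀ c', N.E v c' → c' = c := by
  obtain ⟨c, hc⟩ := Set.ncard_eq_one.mp (h : {u : N.V | N.E v u}.ncard = 1)
  refine ⟨c, ?_, fun c' hc' => ?_⟩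
  · have : c ∈ {u : N.V | N.E v u} := by rw [hc]; rfl
    exact this
  · have : c' ∈ ({c} : Set N.V) := hc ▸ hc'
    simpa using this

/-- The tree-arc relation: an arc whose head has in-degree at most one. -/
def tarc (N : Net X) : N.V → N.V → Prop := fun u v => N.E u v ∧ N.indeg v ≤ 1

lemma tarc_mono {u v : N.V} (h : ReflTransGen N.tarc u v) : ReflTransGen N.E u v :=
  by induction h with
  | refl => exact ReflTransGen.refl
  | tail _ hb ih => exact ih.tail hb.1

lemma tarc_target {u v : N.V} (h : ReflTransGen N.tarc u v) : u = v ∨ N.indeg v ≤ 1 := by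
  rcases ReflTransGen.cases_tail h with h | ⟨w, _, hw⟩
  · exact Or.inl h.symm
  · exact Or.inr hw.2

lemma tarc_unique_pred : ∀ ⦃u u' v : N.V⦄, N.tarc u v → N.tarc u' v → u = u' :=
  fun _ _ _ h h' => Net.parent_unique h.2 h.1 h'.1

lemma exists_treePath (hval : N.ValidNet) (htc : N.TreeChild) (v : N.V) :
    ∃ ℓ : X, ReflTransGen N.tarc v (N.leaf ℓ) := by
  induction v using WellFounded.induction Net.wf_down with
  | _ v ih =>
    by_cases hl : N.IsLeaf v
    · obtain ⟨ℓ, hℓ⟩ := hl; exact ⟨ℓ, hℓ ▸ ReflTransGen.refl⟩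
    · obtain ⟨c, hc, hdeg⟩ := htc v hl
      obtain ⟨ℓ, hℓ⟩ := ih c (TransGen.single hc)
      exact ⟨ℓ, ReflTransGen.head ⟨hc, hdeg⟩ hℓ⟩

end Net

section EmbLemmas

variable {N T : Net (Fin 3)}

lemma emb_rtg (e : Emb N T) {u v : T.V} (h : T.E u v) :
    ReflTransGen N.E (e.φ u) (e.φ v) :=
  chain_rtg _ _ _ (e.chain u v h)

lemma emb_last (e : Emb N T) {u v : T.V} (h : T.E u v) :
    ∃ s, N.E s (e.φ v) ∧ ((s = e.φ u ∧ e.paths u v = []) ∨ s ∈ e.paths u v) := by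
  rcases chain_last _ _ _ (e.chain u v h) with ⟨hl, hr⟩ | ⟨s, hs, hr⟩
  · exact ⟨e.φ u, hr, Or.inl ⟨rfl, hl⟩⟩
  · exact ⟨s, hr, Or.inr hs⟩

/-- A cherry in the network forces the same cherry in any displayed tree. -/
lemma displayed_cherry (hvalN : N.ValidNet) (hvalT : T.ValidNet)
    (e : Emb N T) {p : N.V} {α β : Fin 3} (hab : α ≠ β)
    (hpa : N.E p (N.leaf α)) (hpb : N.E p (N.leaf β)) :
    ∃ q, T.E q (T.leaf α) ∧ T.E q (T.leaf β) := by
  have hTpar : ∀ γ : Fin 3, ∃ u, T.E u (T.leaf γ) := by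
    intro γ
    obtain ⟨u, hu⟩ := Set.ncard_eq_one.mp ((hvalT.2.1 γ).1 :
      {w : T.V | T.E w (T.leaf γ)}.ncard = 1)
    have hmem : u ∈ {w : T.V | T.E w (T.leaf γ)} := by rw [hu]; exact rfl
    exact ⟨u, hmem⟩
  obtain ⟨ua, hua⟩ := hTpar α
  obtain ⟨ub, hub⟩ := hTpar β
  have hlast : ∀ γ (uγ : T.V), T.E uγ (T.leaf γ) → N.E p (N.leaf γ) →
      (p = e.φ uγ ∧ e.paths uγ (T.leaf γ) = []) ∨ p ∈ e.paths uγ (T.leaf γ) := by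
    intro γ uγ huγ hpγ
    obtain ⟨s, hsE, hs⟩ := emb_last e huγ
    rw [e.leafmap γ] at hsE
    have hsp : s = p := Net.parent_unique (le_of_eq (hvalN.2.1 γ).1) hsE hpγ
    subst hsp
    rcases hs with ⟨h1, h2⟩ | h
    · exact Or.inl ⟨h1, h2⟩
    · exact Or.inr h
  rcases hlast α ua hua hpa with ⟨ha1, _⟩ | ha1 <;>
    rcases hlast β ub hub hpb with ⟨hb1, _⟩ | hb1
  · have : ua = ub := e.inj (ha1 ▸ hb1)
    exact ⟨ua, hua, this ▸ hub⟩
  · exact absurd ⟨ua, ha1.symm⟩ (e.internal ub (T.leaf β) hub p hb1)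
  · exact absurd ⟨ub, hb1.symm⟩ (e.internal ua (T.leaf α) hua p ha1)
  · exfalso
    refine e.disjoint ua (T.leaf α) ub (T.leaf β) hua hub ?_ p ha1 hb1
    intro hpq
    exact hab (T.leaf_inj (congrArg Prod.snd hpq))

end EmbLemmas

lemma fin3_four : ∀ a b c d : Fin 3, b ≠ a → c ≠ a → d ≠ a → b ≠ c → d ≠ b → d ≠ c → False := by
  decide

lemma fin3_pair : ∀ x y z x' y' : Fin 3, x ≠ y → x ≠ z → y ≠ z → x' ≠ y' → x' ≠ z → y' ≠ z →
    (x = x' ∧ y = y') ∨ (x = y' ∧ y = x') := by decide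

lemma fin3_third_unique : ∀ α β z z' : Fin 3, α ≠ β → z ≠ α → z ≠ β → z' ≠ α → z' ≠ β → z = z' := by
  decide

lemma fin3_pick : ∀ z1 z2 z3 b c : Fin 3, z1 ≠ z2 → z1 ≠ z3 → z2 ≠ z3 →
    (z1 ≠ b ∧ z1 ≠ c) ∨ (z2 ≠ b ∧ z2 ≠ c) ∨ (z3 ≠ b ∧ z3 ≠ c) := by decide

lemma fin3_pair2 : ∀ x y z b c : Fin 3, x ≠ y → x ≠ z → y ≠ z → b ≠ c → z ≠ b → z ≠ c →
    (x = b ∧ y = c) ∨ (x = c ∧ y = b) := by decide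
open Relation in
lemma no_cherry_main {N : Net (Fin 3)} (hn : N.Normal)
    (hnc : ∀ (p : N.V) (α β : Fin 3), α ≠ β → N.E p (N.leaf α) → N.E p (N.leaf β) → False) :
    ∃ b c : Fin 3, b ≠ c ∧ ∀ (T : Net (Fin 3)) (x y z : Fin 3) (p : T.V),
      TreeStruct T x y z p → ((x = b ∧ y = c) ∨ (x = c ∧ y = b)) → ¬ N.Displays T := by
  obtain ⟨hval, htc, hns⟩ := hn
  -- the lowest non-leaf vertex is a reticulation above a leaf
  obtain ⟨R, hRnl, hRc⟩ := Net.exists_lowest_nonleaf hval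
  have hRroot : R ≠ N.root := by
    rintro rfl
    obtain ⟨c1, c2, h12, hc1, hc2, _⟩ := Net.outdeg_two_children hval.1
    obtain ⟨α, hα⟩ := hRc c1 hc1
    obtain ⟨β, hβ⟩ := hRc c2 hc2
    have hab : α ≠ β := by rintro rfl; exact h12 (hα ▸ hβ ▸ rfl)
    exact hnc N.root α β hab (by rw [hα]; exact hc1) (by rw [hβ]; exact hc2)
  have hRtype : 2 ≤ N.indeg R ∧ N.outdeg R = 1 := by
    rcases hval.2.2.2 R hRroot hRnl with h | h
    · exfalso
      obtain ⟨c1, c2, h12, hc1, hc2, _⟩ := Net.outdeg_two_children h.2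
      obtain ⟨α, hα⟩ := hRc c1 hc1
      obtain ⟨β, hβ⟩ := hRc c2 hc2
      have hab : α ≠ β := by rintro rfl; exact h12 (hα ▸ hβ ▸ rfl)
      exact hnc R α β hab (by rw [hα]; exact hc1) (by rw [hβ]; exact hc2)
    · exact h
  obtain ⟨cR, hcR, hcRu⟩ := Net.outdeg_one_child' hRtype.2
  obtain ⟨a0, ha0⟩ := hRc cR hcR
  have hRa : N.E R (N.leaf a0) := by rw [ha0]; exact hcR
  have ha_par : ∀ u, N.E u (N.leaf a0) → u = R :=
    fun u hu => Net.parent_unique (le_of_eq (hval.2.1 a0).1) hu hRa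
  -- parents of reticulations are tree vertices
  have hparent : ∀ Rx q : N.V, 2 ≤ N.indeg Rx → N.outdeg Rx = 1 → N.E q Rx →
      N.indeg q = 1 ∧ N.outdeg q = 2 := by
    intro Rx q hdeg hout hq
    have hqroot : q ≠ N.root := by
      rintro rfl
      obtain ⟨q1, q2, h12, h1, h2⟩ := Net.two_parents hdeg
      have hex : ∃ q', q' ≠ N.root ∧ N.E q' Rx := by
        by_cases h : q1 = N.root
        · exact ⟨q2, fun hh => h12 (h.trans hh.symm), h2⟩
        · exact ⟨q1, h, h1⟩
      obtain ⟨q', hq', hq'R⟩ := hex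
      exact hns N.root Rx ⟨hq, hdeg, q', hq', hq'R, N.connected q'⟩
    have hqnl : ¬ N.IsLeaf q := fun ⟨w, hw⟩ => Net.leaf_no_out hval (hw ▸ hq : N.E (N.leaf w) Rx)
    rcases hval.2.2.2 q hqroot hqnl with h | h
    · exact h
    · exfalso
      obtain ⟨c, hc, hcdeg⟩ := htc q hqnl
      have hcR : c = Rx := Net.outdeg_one_child h.2 hc hq
      rw [hcR] at hcdeg; omega
  have hother : ∀ Rx q : N.V, 2 ≤ N.indeg Rx → N.E q Rx →
      ∃ s, s ≠ Rx ∧ N.E q s ∧ N.indeg s ≤ 1 := by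
    intro Rx q hdeg hq
    have hqnl : ¬ N.IsLeaf q := fun ⟨w, hw⟩ => Net.leaf_no_out hval (hw ▸ hq : N.E (N.leaf w) Rx)
    obtain ⟨c, hc, hcdeg⟩ := htc q hqnl
    exact ⟨c, fun h => by rw [h] at hcdeg; omega, hc, hcdeg⟩
  -- start of a tree path ending in a reticulation-covered leaf
  have htpa : ∀ (Rx : N.V) (ℓ : Fin 3) (s : N.V), N.E Rx (N.leaf ℓ) → 2 ≤ N.indeg Rx →
      ReflTransGen N.tarc s (N.leaf ℓ) → s = N.leaf ℓ ∨ s = Rx := by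
    intro Rx ℓ s hRx hdeg h
    rcases ReflTransGen.cases_tail h with h' | ⟨u, hsu, hu⟩
    · exact Or.inl h'.symm
    · have hu' : u = Rx := Net.parent_unique (le_of_eq (hval.2.1 ℓ).1) hu.1 hRx
      subst hu'
      rcases Net.tarc_target hsu with h'' | h''
      · exact Or.inr h''
      · omega
  have hstart : ∀ (Rx : N.V) (ℓ : Fin 3) (q s : N.V), N.E Rx (N.leaf ℓ) → 2 ≤ N.indeg Rx →
      N.E q s → N.indeg s ≤ 1 → ReflTransGen N.tarc s (N.leaf ℓ) → q = Rx := by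
    intro Rx ℓ q s hRx hdeg hqs hsdeg h
    rcases htpa Rx ℓ s hRx hdeg h with rfl | rfl
    · exact Net.parent_unique (le_of_eq (hval.2.1 ℓ).1) hqs hRx
    · omega
  -- merging of two tree paths to the same leaf
  have hmerge : ∀ (q1 s1 q2 s2 : N.V) (ℓ : Fin 3), N.E q1 s1 → N.indeg s1 ≤ 1 →
      N.E q2 s2 → N.indeg s2 ≤ 1 →
      ReflTransGen N.tarc s1 (N.leaf ℓ) → ReflTransGen N.tarc s2 (N.leaf ℓ) →
      s1 = s2 ∨ ReflTransGen N.tarc s1 q2 ∨ ReflTransGen N.tarc s2 q1 := by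
    intro q1 s1 q2 s2 ℓ h1e h1d h2e h2d h1 h2
    rcases rtg_comparable Net.tarc_unique_pred h1 h2 with h | h
    · rcases ReflTransGen.cases_tail h with h' | ⟨u, hsu, hu⟩
      · exact Or.inl h'.symm
      · have : u = q2 := Net.parent_unique h2d hu.1 h2e
        exact Or.inr (Or.inl (this ▸ hsu))
    · rcases ReflTransGen.cases_tail h with h' | ⟨u, hsu, hu⟩
      · exact Or.inl h'
      · have : u = q1 := Net.parent_unique h1d hu.1 h1e
        exact Or.inr (Or.inr (this ▸ hsu))
  -- two parents of a common reticulation have tree paths to distinct leaves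
  have hdistinct : ∀ (Rx qa sa qb sb : N.V) (ℓ : Fin 3), N.E qa Rx → N.E qb Rx →
      2 ≤ N.indeg Rx → qa ≠ qb → N.E qa sa → N.indeg sa ≤ 1 → N.E qb sb → N.indeg sb ≤ 1 →
      ReflTransGen N.tarc sa (N.leaf ℓ) → ReflTransGen N.tarc sb (N.leaf ℓ) → False := by
    intro Rx qa sa qb sb ℓ hqaR hqbR hdeg hab hqasa hsad hqbsb hsbd ha hb
    rcases hmerge qa sa qb sb ℓ hqasa hsad hqbsb hsbd ha hb with h | h | h
    · subst h
      have := Net.indeg_two_of_parents hqasa hqbsb hab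
      omega
    · exact hns qa Rx ⟨hqaR, hdeg, qb, Ne.symm hab, hqbR,
        ReflTransGen.head hqasa (Net.tarc_mono h)⟩
    · exact hns qb Rx ⟨hqbR, hdeg, qa, hab, hqaR,
        ReflTransGen.head hqbsb (Net.tarc_mono h)⟩
  -- the two parents of R and their tree paths
  obtain ⟨q1, q2, hq12, hq1R, hq2R⟩ := Net.two_parents hRtype.1
  obtain ⟨s1, hs1R, hq1s1, hs1d⟩ := hother R q1 hRtype.1 hq1R
  obtain ⟨s2, hs2R, hq2s2, hs2d⟩ := hother R q2 hRtype.1 hq2R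
  obtain ⟨b0, hb0⟩ := Net.exists_treePath hval htc s1
  obtain ⟨c0, hc0⟩ := Net.exists_treePath hval htc s2
  have hb0a : b0 ≠ a0 := by
    rintro rfl
    have := hstart R b0 q1 s1 hRa hRtype.1 hq1s1 hs1d hb0
    exact N.acyclic R (TransGen.single (this ▸ hq1R))
  have hc0a : c0 ≠ a0 := by
    rintro rfl
    have := hstart R c0 q2 s2 hRa hRtype.1 hq2s2 hs2d hc0
    exact N.acyclic R (TransGen.single (this ▸ hq2R))
  have hbc : b0 ≠ c0 := by
    rintro rfl
    exact hdistinct R q1 s1 q2 s2 b0 hq1R hq2R hRtype.1 hq12 hq1s1 hs1d hq2s2 hs2d hb0 hc0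
  -- the parents of R are exactly q1 and q2
  have hparents2 : ∀ q, N.E q R → q = q1 ∨ q = q2 := by
    intro q hq
    by_contra hcon
    push_neg at hcon
    obtain ⟨s, hsR, hqs, hsd⟩ := hother R q hRtype.1 hq
    obtain ⟨ℓ, hℓ⟩ := Net.exists_treePath hval htc s
    have hℓa : ℓ ≠ a0 := by
      rintro rfl
      have := hstart R ℓ q s hRa hRtype.1 hqs hsd hℓ
      exact N.acyclic R (TransGen.single (this ▸ hq))
    have hℓb : ℓ ≠ b0 := by
      rintro rfl
      exact hdistinct R q s q1 s1 ℓ hq hq1R hRtype.1 hcon.1 hqs hsd hq1s1 hs1d hℓ hb0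
    have hℓc : ℓ ≠ c0 := by
      rintro rfl
      exact hdistinct R q s q2 s2 ℓ hq hq2R hRtype.1 hcon.2 hqs hsd hq2s2 hs2d hℓ hc0
    exact fin3_four a0 b0 c0 ℓ hb0a hc0a hℓa hbc hℓb hℓc
  -- R is the unique reticulation
  have hRuniq : ∀ v, 2 ≤ N.indeg v → v = R := by
    intro R2 hR2
    by_contra hne
    have hR2root : R2 ≠ N.root := by
      rintro rfl
      have := Net.indeg_root_eq (N := N); omega
    have hR2nl : ¬ N.IsLeaf R2 := by
      rintro ⟨w, hw⟩
      have := (hval.2.1 w).1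
      rw [hw] at this; omega
    have hR2out : N.outdeg R2 = 1 := by
      rcases hval.2.2.2 R2 hR2root hR2nl with h | h
      · omega
      · exact h.2
    obtain ⟨w, hR2w, hwu⟩ := Net.outdeg_one_child' hR2out
    have hwdeg : N.indeg w ≤ 1 := by
      obtain ⟨c, hc, hcd⟩ := htc R2 hR2nl
      rw [hwu c hc] at hcd; exact hcd
    obtain ⟨u1, u2, hu12, hu1, hu2⟩ := Net.two_parents hR2
    obtain ⟨t1, ht1R, hu1t1, ht1d⟩ := hother R2 u1 hR2 hu1
    obtain ⟨t2, ht2R, hu2t2, ht2d⟩ := hother R2 u2 hR2 hu2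
    obtain ⟨m1, hm1⟩ := Net.exists_treePath hval htc t1
    obtain ⟨m2, hm2⟩ := Net.exists_treePath hval htc t2
    have hu1out : N.outdeg u1 = 2 := (hparent R2 u1 hR2 hR2out hu1).2
    have hu2out : N.outdeg u2 = 2 := (hparent R2 u2 hR2 hR2out hu2).2
    have hm1a : m1 ≠ a0 := by
      rintro rfl
      have := hstart R m1 u1 t1 hRa hRtype.1 hu1t1 ht1d hm1
      rw [this] at hu1out
      rw [hRtype.2] at hu1out; omega
    have hm2a : m2 ≠ a0 := by
      rintro rfl
      have := hstart R m2 u2 t2 hRa hRtype.1 hu2t2 ht2d hm2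
      rw [this] at hu2out
      rw [hRtype.2] at hu2out; omega
    have hm12 : m1 ≠ m2 := by
      rintro rfl
      exact hdistinct R2 u1 t1 u2 t2 m1 hu1 hu2 hR2 hu12 hu1t1 ht1d hu2t2 ht2d hm1 hm2
    -- the child w of R2
    by_cases hwl : N.IsLeaf w
    · obtain ⟨ℓw, hℓw⟩ := hwl
      have hR2ℓ : N.E R2 (N.leaf ℓw) := by rw [hℓw]; exact hR2w
      have hℓwa : ℓw ≠ a0 := by
        rintro rfl
        exact hne (ha_par R2 hR2ℓ)
      have hℓwm1 : m1 ≠ ℓw := by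
        rintro rfl
        have := hstart R2 m1 u1 t1 hR2ℓ hR2 hu1t1 ht1d hm1
        rw [this, hR2out] at hu1out; omega
      have hℓwm2 : m2 ≠ ℓw := by
        rintro rfl
        have := hstart R2 m2 u2 t2 hR2ℓ hR2 hu2t2 ht2d hm2
        rw [this, hR2out] at hu2out; omega
      exact fin3_four a0 m1 m2 ℓw hm1a hm2a hℓwa hm12 (Ne.symm hℓwm1) (Ne.symm hℓwm2)
    · obtain ⟨mw, hmw⟩ := Net.exists_treePath hval htc w
      have hmwa : mw ≠ a0 := by
        rintro rfl
        exact hne (hstart R mw R2 w hRa hRtype.1 hR2w hwdeg hmw)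
      have hmwm : ∀ (u t : N.V) (m : Fin 3), N.E u R2 → N.outdeg u = 2 → N.E u t →
          N.indeg t ≤ 1 → ReflTransGen N.tarc t (N.leaf m) →
          ReflTransGen N.tarc w (N.leaf m) → False := by
        intro u t m huR2 huout hut htd htm hwm
        rcases hmerge R2 w u t m hR2w hwdeg hut htd hwm htm with h | h | h
        · have : R2 = u := Net.parent_unique hwdeg hR2w (h ▸ hut)
          rw [← this, hR2out] at huout; omega
        · exact N.acyclic R2 (TransGen.head' hR2w ((Net.tarc_mono h).tail huR2))
        · rcases Net.tarc_target h with h' | h'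
          · rw [h'] at htd; omega
          · omega
      have hmwm1 : mw ≠ m1 := fun h => hmwm u1 t1 m1 hu1 hu1out hu1t1 ht1d hm1 (h ▸ hmw)
      have hmwm2 : mw ≠ m2 := fun h => hmwm u2 t2 m2 hu2 hu2out hu2t2 ht2d hm2 (h ▸ hmw)
      exact fin3_four a0 m1 m2 mw hm1a hm2a hmwa hm12 hmwm1 hmwm2
  -- reachability from R
  have hreachR : ∀ v, ReflTransGen N.E R v → v = R ∨ v = N.leaf a0 := by
    intro v h
    rcases ReflTransGen.cases_head h with h | ⟨c, hc, hcv⟩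
    · exact Or.inl h.symm
    · have : c = N.leaf a0 := by rw [hcRu c hc, ← ha0]
      subst this
      exact Or.inr (Net.rtg_from_leaf hval hcv)
  -- every ancestor of a non-a0 leaf has in-degree at most one
  have hancdeg : ∀ (ℓ : Fin 3), ℓ ≠ a0 → ∀ v, ReflTransGen N.E v (N.leaf ℓ) →
      N.indeg v ≤ 1 := by
    intro ℓ hℓ v hv
    by_contra hcon
    push_neg at hcon
    have hvR : v = R := hRuniq v hcon
    subst hvR
    rcases hreachR _ hv with h | h
    · exact hRnl ⟨ℓ, h⟩
    · exact hℓ (N.leaf_inj h)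
  -- ancestors of a non-a0 leaf are totally ordered
  have hanccomp : ∀ (ℓ : Fin 3), ℓ ≠ a0 → ∀ u v, ReflTransGen N.E u (N.leaf ℓ) →
      ReflTransGen N.E v (N.leaf ℓ) →
      ReflTransGen N.E u v ∨ ReflTransGen N.E v u := by
    intro ℓ hℓ u v hu hv
    have hconv : ∀ w, ReflTransGen N.E w (N.leaf ℓ) →
        ReflTransGen (fun a b => N.E a b ∧ ReflTransGen N.E b (N.leaf ℓ)) w (N.leaf ℓ) := by
      intro w hw
      induction hw using Relation.ReflTransGen.head_induction_on with
      | refl => exact ReflTransGen.refl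
      | head h' h ih => exact ReflTransGen.head ⟨h', h⟩ ih
    have hru : ∀ ⦃p p' q : N.V⦄, (fun a b => N.E a b ∧ ReflTransGen N.E b (N.leaf ℓ)) p q →
        (fun a b => N.E a b ∧ ReflTransGen N.E b (N.leaf ℓ)) p' q → p = p' :=
      fun p p' q h h' => Net.parent_unique (hancdeg ℓ hℓ q h.2) h.1 h'.1
    rcases rtg_comparable hru (hconv u hu) (hconv v hv) with h | h
    · exact Or.inl (ReflTransGen.mono (r := fun a b => N.E a b ∧ ReflTransGen N.E b (N.leaf ℓ))
        (fun _ _ hab => hab.1) _ _ h)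
    · exact Or.inr (ReflTransGen.mono (r := fun a b => N.E a b ∧ ReflTransGen N.E b (N.leaf ℓ))
        (fun _ _ hab => hab.1) _ _ h)
  -- only the root reaches both b0 and c0
  have hclaimE : ∀ v, ReflTransGen N.E v (N.leaf b0) → ReflTransGen N.E v (N.leaf c0) →
      v = N.root := by
    intro v0 hvb0 hvc0
    by_contra hv0
    obtain ⟨m, hmS, hmmin⟩ := WellFounded.has_min (Net.wf_up (N := N))
      {v : N.V | v ≠ N.root ∧ ReflTransGen N.E v (N.leaf b0) ∧ ReflTransGen N.E v (N.leaf c0)}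
      ⟨v0, hv0, hvb0, hvc0⟩
    obtain ⟨hmroot, hmb, hmc⟩ := hmS
    have hmpar : ∀ u, N.E u m → u = N.root := by
      intro u hu
      by_contra hur
      exact hmmin u ⟨hur, ReflTransGen.head hu hmb, ReflTransGen.head hu hmc⟩
        (TransGen.single hu)
    obtain ⟨π, hπ⟩ := Net.exists_parent hmroot
    have hrootm : N.E N.root m := by rw [← hmpar π hπ]; exact hπ
    obtain ⟨z1, z2, hz12, hz1, hz2, _⟩ := Net.outdeg_two_children hval.1
    have hzex : ∃ zc, N.E N.root zc ∧ zc ≠ m := by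
      by_cases h : z1 = m
      · exact ⟨z2, hz2, fun hh => hz12 (h ▸ hh ▸ rfl)⟩
      · exact ⟨z1, hz1, h⟩
    obtain ⟨zc, hzcr, hzcm⟩ := hzex
    have hnb : ∀ (ℓ : Fin 3), ℓ ≠ a0 → ReflTransGen N.E m (N.leaf ℓ) →
        ReflTransGen N.E zc (N.leaf ℓ) → False := by
      intro ℓ hℓ hm hz
      rcases hanccomp ℓ hℓ zc m hz hm with h | h
      · rcases ReflTransGen.cases_tail h with h' | ⟨u, hzu, hum⟩
        · exact hzcm h'.symm
        · rw [hmpar u hum] at hzu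
          have : zc = N.root := Net.rtg_root hzu
          exact N.acyclic N.root (TransGen.single (this ▸ hzcr))
      · rcases ReflTransGen.cases_tail h with h' | ⟨u, hmu, huz⟩
        · exact hzcm h'
        · have hzdeg : N.indeg zc ≤ 1 := hancdeg ℓ hℓ zc hz
          rw [Net.parent_unique hzdeg huz hzcr] at hmu
          exact hmroot (Net.rtg_root hmu)
    obtain ⟨ℓz, hℓz⟩ := Net.reach_leaf hval zc
    rcases fin3_cover b0 c0 a0 ℓz hbc hb0a hc0a with rfl | rfl | rfl
    · exact hnb ℓz hb0a hmb hℓz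
    · exact hnb ℓz hc0a hmc hℓz
    · rcases ReflTransGen.cases_tail hℓz with h' | ⟨u, hzu, hu⟩
      · rw [← h'] at hzcr
        exact hRroot (ha_par N.root hzcr).symm
      · rw [ha_par u hu] at hzu
        rcases ReflTransGen.cases_tail hzu with h'' | ⟨u', hzu', hu'R⟩
        · rw [← h''] at hzcr
          have := (hparent R N.root hRtype.1 hRtype.2 hzcr).1
          rw [Net.indeg_root_eq] at this; omega
        · rcases hparents2 u' hu'R with rfl | rfl
          · exact hnb b0 hb0a hmb
              (hzu'.trans (ReflTransGen.head hq1s1 (Net.tarc_mono hb0)))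
          · exact hnb c0 hc0a hmc
              (hzu'.trans (ReflTransGen.head hq2s2 (Net.tarc_mono hc0)))
  -- conclusion: no tree with cherry {b0, c0} is displayed
  refine ⟨b0, c0, hbc, ?_⟩
  rintro T x y z p hs hxy' ⟨e⟩
  obtain ⟨hxy, hxz, hyz, hpr, hlp, hlr, hTE, hcov⟩ := hs
  have hepx : T.E p (T.leaf x) := (hTE p (T.leaf x)).mpr (Or.inr ⟨rfl, Or.inl rfl⟩)
  have hepy : T.E p (T.leaf y) := (hTE p (T.leaf y)).mpr (Or.inr ⟨rfl, Or.inr rfl⟩)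
  have herp : T.E T.root p := (hTE T.root p).mpr (Or.inl ⟨rfl, Or.inl rfl⟩)
  have h1 : ReflTransGen N.E (e.φ p) (N.leaf x) := by
    have := emb_rtg e hepx; rwa [e.leafmap x] at this
  have h2 : ReflTransGen N.E (e.φ p) (N.leaf y) := by
    have := emb_rtg e hepy; rwa [e.leafmap y] at this
  have hvroot : e.φ p = N.root := by
    rcases hxy' with ⟨rfl, rfl⟩ | ⟨rfl, rfl⟩
    · exact hclaimE _ h1 h2
    · exact hclaimE _ h2 h1
  obtain ⟨s, hsE, _⟩ := emb_last e herp
  rw [hvroot] at hsE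
  exact N.no_in_root s hsE

theorem stmt8 (T₁ T₂ T₃ : Net (Fin 3))
    (h₁ : T₁.IsBinTree) (h₂ : T₂.IsBinTree) (h₃ : T₃.IsBinTree)
    (h12 : ¬ T₁.Iso T₂) (h13 : ¬ T₁.Iso T₃) (h23 : ¬ T₂.Iso T₃) :
    ¬ ∃ N : Net (Fin 3), N.Normal ∧ N.Displays T₁ ∧ N.Displays T₂ ∧
      N.Displays T₃ := by
  rintro ⟨N, hnorm, ⟨e1⟩, ⟨e2⟩, ⟨e3⟩⟩
  obtain ⟨x1, y1, z1, p1, hs1⟩ := exists_treeStruct h₁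
  obtain ⟨x2, y2, z2, p2, hs2⟩ := exists_treeStruct h₂
  obtain ⟨x3, y3, z3, p3, hs3⟩ := exists_treeStruct h₃
  have hvalN := hnorm.1
  have hiso : ∀ {T T' : Net (Fin 3)} {x y z x' y' : Fin 3} {pT : T.V} {pT' : T'.V},
      TreeStruct T x y z pT → TreeStruct T' x' y' z pT' → T.Iso T' := by
    intro T T' x y z x' y' pT pT' hT hT'
    rcases fin3_pair x y z x' y' hT.1 hT.2.1 hT.2.2.1 hT'.1 hT'.2.1 hT'.2.2.1 with
      ⟨rfl, rfl⟩ | ⟨rfl, rfl⟩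
    · exact iso_of_treeStruct hT hT'
    · exact iso_of_treeStruct (treeStruct_swap hT) hT'
  have hz12 : z1 ≠ z2 := fun h => h12 (hiso hs1 (h ▸ hs2))
  have hz13 : z1 ≠ z3 := fun h => h13 (hiso hs1 (h ▸ hs3))
  have hz23 : z2 ≠ z3 := fun h => h23 (hiso hs2 (h ▸ hs3))
  by_cases hch : ∃ (pN : N.V) (α β : Fin 3), α ≠ β ∧ N.E pN (N.leaf α) ∧ N.E pN (N.leaf β)
  · obtain ⟨pN, α, β, hab, hpα, hpβ⟩ := hch
    obtain ⟨qa, hqa1, hqa2⟩ := displayed_cherry hvalN h₁.1 e1 hab hpα hpβ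
    obtain ⟨qb, hqb1, hqb2⟩ := displayed_cherry hvalN h₂.1 e2 hab hpα hpβ
    have c1 := treeStruct_cherry_unique hs1 hab hqa1 hqa2
    have c2 := treeStruct_cherry_unique hs2 hab hqb1 hqb2
    have hz1ab : z1 ≠ α ∧ z1 ≠ β := by
      rcases c1 with ⟨rfl, rfl⟩ | ⟨rfl, rfl⟩
      · exact ⟨Ne.symm hs1.2.1, Ne.symm hs1.2.2.1⟩
      · exact ⟨Ne.symm hs1.2.2.1, Ne.symm hs1.2.1⟩
    have hz2ab : z2 ≠ α ∧ z2 ≠ β := by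
      rcases c2 with ⟨rfl, rfl⟩ | ⟨rfl, rfl⟩
      · exact ⟨Ne.symm hs2.2.1, Ne.symm hs2.2.2.1⟩
      · exact ⟨Ne.symm hs2.2.2.1, Ne.symm hs2.2.1⟩
    exact hz12 (fin3_third_unique α β z1 z2 hab hz1ab.1 hz1ab.2 hz2ab.1 hz2ab.2)
  · have hnc : ∀ (p : N.V) (α β : Fin 3), α ≠ β → N.E p (N.leaf α) → N.E p (N.leaf β) →
        False := fun p α β h hh1 hh2 => hch ⟨p, α, β, h, hh1, hh2⟩
    obtain ⟨b0, c0, hbc, hkill⟩ := no_cherry_main hnorm hnc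
    rcases fin3_pick z1 z2 z3 b0 c0 hz12 hz13 hz23 with ⟨hb, hc⟩ | ⟨hb, hc⟩ | ⟨hb, hc⟩
    · exact hkill T₁ x1 y1 z1 p1 hs1
        (fin3_pair2 x1 y1 z1 b0 c0 hs1.1 hs1.2.1 hs1.2.2.1 hbc hb hc) ⟨e1⟩
    · exact hkill T₂ x2 y2 z2 p2 hs2
        (fin3_pair2 x2 y2 z2 b0 c0 hs2.1 hs2.2.1 hs2.2.2.1 hbc hb hc) ⟨e2⟩
    · exact hkill T₃ x3 y3 z3 p3 hs3
        (fin3_pair2 x3 y3 z3 b0 c0 hs3.1 hs3.2.1 hs3.2.2.1 hbc hb hc) ⟨e3⟩
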